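/- arXiv:1204.1047 — 2 statements merged into one kernel-verified Lean document; each statement's English description precedes it below -/
import Mathlib

section
/- Let a group G act on a set Y such that every orbit is infinite, and let w₁, …, wₙ be finitely many distinct points of Y. Then there exists a sequence (gᵢ)_{i=0}^∞ in G such that the points gᵢ·wⱼ (i ≥ 0, 1 ≤ j ≤ n) are pairwise distinct. -/
open Pointwise in
lemma stmt2_key {G Y : Type*} [Group G] [MulAction G Y]
    (horb : ∀ w : Y, (MulAction.orbit G w).Infinite)
    {n : ℕ} (w : Fin n → Y) (F : Finset Y) :
    ∃ g : G, ∀ j, g • w j ∉ F := by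
  by_contra hc
  push_neg at hc
  classical
  set g0 : Fin n × F → G := fun p =>
    if h : ∃ g : G, g • w p.1 = (p.2 : Y) then h.choose else 1 with hg0
  have hcover : ⋃ p ∈ (Finset.univ : Finset (Fin n × F)),
      g0 p • ((MulAction.stabilizer G (w p.1) : Subgroup G) : Set G) = Set.univ := by
    ext g
    simp only [Set.mem_iUnion, Set.mem_univ, iff_true]
    obtain ⟨j, hj⟩ := hc g
    refine ⟨(j, ⟨g • w j, hj⟩), Finset.mem_univ _, ?_⟩
    have hex : ∃ g' : G, g' • w j = g • w j := ⟨g, rfl⟩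
    have hgp : g0 (j, ⟨g • w j, hj⟩) • w j = g • w j := by
      simp only [hg0, dif_pos hex]
      exact hex.choose_spec
    rw [mem_leftCoset_iff, SetLike.mem_coe, MulAction.mem_stabilizer_iff,
      mul_smul, inv_smul_eq_iff, hgp]
  obtain ⟨p, -, hp⟩ := Subgroup.exists_finiteIndex_of_leftCoset_cover hcover
  have : Finite (MulAction.orbit G (w p.1)) :=
    Finite.of_equiv _ (MulAction.orbitEquivQuotientStabilizer G (w p.1)).symm
  exact (horb (w p.1)) (MulAction.orbit G (w p.1)).toFinite

/-- If every orbit of a group action of `G` on `Y` is infinite, then for any finitely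
many distinct points `w₁, …, wₙ` there is a sequence `(gᵢ)` in `G` such that the points
`gᵢ • wⱼ` are pairwise distinct. -/
theorem stmt2 {G Y : Type*} [Group G] [MulAction G Y]
    (horb : ∀ w : Y, (MulAction.orbit G w).Infinite)
    (n : ℕ) (w : Fin n → Y) (hw : Function.Injective w) :
    ∃ g : ℕ → G, Function.Injective (fun p : ℕ × Fin n => g p.1 • w p.2) := by
  classical
  set pick : Finset Y → G := fun F => (stmt2_key horb w F).choose with hpickdef
  have hpick : ∀ F j, pick F • w j ∉ F := fun F => (stmt2_key horb w F).choose_spec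
  set F : ℕ → Finset Y := fun i => Nat.rec ∅
    (fun _ Fi => Fi ∪ Finset.image (fun j => pick Fi • w j) Finset.univ) i with hF
  set g : ℕ → G := fun i => pick (F i) with hg
  have hFsucc : ∀ i, F (i + 1) = F i ∪ Finset.image (fun j => g i • w j) Finset.univ :=
    fun i => rfl
  have hmem : ∀ i j, g i • w j ∈ F (i + 1) := fun i j => by
    rw [hFsucc]
    exact Finset.mem_union_right _ (Finset.mem_image_of_mem _ (Finset.mem_univ j))
  have hmono : ∀ i i', i ≤ i' → F i ⊆ F i' := by
    intro i i' h
    induction h with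
    | refl => exact subset_rfl
    | step h ih =>
        intro x hx
        rw [hFsucc]
        exact Finset.mem_union_left _ (ih hx)
  have hnot : ∀ i j, g i • w j ∉ F i := fun i j => hpick (F i) j
  refine ⟨g, ?_⟩
  rintro ⟨i, j⟩ ⟨i', j'⟩ h
  simp only at h
  rcases lt_trichotomy i i' with hlt | heq | hlt
  · exact absurd (h ▸ hmono (i + 1) i' hlt (hmem i j)) (hnot i' j')
  · subst heq
    have := hw (smul_left_cancel (g i) h)
    simp [this]
  · exact absurd (h ▸ hmono (i' + 1) i hlt (hmem i' j')) (hnot i j)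
end

section
/- In a geodesic metric space Y, suppose there exist a point p and radii r < R such that: (a) every point of Y is within distance r of some point in the orbit of p under a group G acting by isometries, and (b) for any two points x, y in the same connected component of Y ∖ B(p,R), the geodesic segment [x,y] does not meet B(p,r). Then Y satisfies the Bottleneck Property: there exists Δ > 0 such that for all x, y ∈ Y, the midpoint m of a geodesic [x,y] has the property that every path from x to y passes within distance Δ of m. -/
/-- `γ` is a geodesic segment from `x` to `y`, parametrized by arclength on
`[0, dist x y]`. -/
def IsGeodSeg {Y : Type*} [MetricSpace Y] (γ : ℝ → Y) (x y : Y) : Prop :=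
  γ 0 = x ∧ γ (dist x y) = y ∧
    ∀ s ∈ Set.Icc (0:ℝ) (dist x y), ∀ t ∈ Set.Icc (0:ℝ) (dist x y),
      dist (γ s) (γ t) = |s - t|

/-- If `Y` is a geodesic space, `G` acts by isometries with the orbit of `B(p,r)`
covering `Y`, and whenever `x, y` lie in the same path component of `Y ∖ B(p,R)` the
geodesic `[x,y]` misses `B(p,r)`, then `Y` has Manning's Bottleneck Property: there is
`Δ > 0` such that for all `x, y` there is a midpoint `m` of `[x,y]` with every path
from `x` to `y` passing within distance less than `Δ` of `m`. -/
theorem stmt4 {Y G : Type*} [MetricSpace Y] [Group G] [MulAction G Y]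
    (hiso : ∀ g : G, Isometry (fun y : Y => g • y))
    (p : Y) (r R : ℝ) (hr : 0 < r) (hrR : r < R)
    (hgeod : ∀ x y : Y, ∃ γ : ℝ → Y, IsGeodSeg γ x y)
    (hcov : ∀ y : Y, ∃ g : G, dist y (g • p) < r)
    (hsep : ∀ x y : Y, x ∉ Metric.ball p R → y ∉ Metric.ball p R →
      JoinedIn (Metric.ball p R)ᶜ x y →
      ∀ γ : ℝ → Y, IsGeodSeg γ x y →
        ∀ t ∈ Set.Icc (0:ℝ) (dist x y), γ t ∉ Metric.ball p r) :
    ∃ Δ > (0:ℝ), ∀ x y : Y, ∃ m : Y,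
      dist x m = dist x y / 2 ∧ dist y m = dist x y / 2 ∧
      ∀ c : Path x y, ∃ t, dist (c t) m < Δ := by
  refine ⟨R + r + 1, by linarith, fun x y => ?_⟩
  obtain ⟨γ, hγ0, hγd, hγ⟩ := hgeod x y
  have hd : (0:ℝ) ≤ dist x y := dist_nonneg
  have hmem : dist x y / 2 ∈ Set.Icc (0:ℝ) (dist x y) := ⟨by linarith, by linarith⟩
  have h0mem : (0:ℝ) ∈ Set.Icc (0:ℝ) (dist x y) := ⟨le_refl _, hd⟩
  have hdmem : dist x y ∈ Set.Icc (0:ℝ) (dist x y) := ⟨hd, le_refl _⟩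
  set m := γ (dist x y / 2) with hm
  have hxm : dist x m = dist x y / 2 := by
    have h := hγ 0 h0mem (dist x y / 2) hmem
    rw [hγ0] at h
    rw [h, abs_of_nonpos (by linarith)]; ring
  have hym : dist y m = dist x y / 2 := by
    have h := hγ (dist x y) hdmem (dist x y / 2) hmem
    rw [hγd] at h
    rw [h, abs_of_nonneg (by linarith)]; ring
  refine ⟨m, hxm, hym, fun c => ?_⟩
  by_contra hcon
  push_neg at hcon
  -- from t = 0 : the midpoint is far, so dist x y is large
  have hbig : R + r + 1 ≤ dist x y / 2 := by
    have := hcon 0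
    rw [c.source, hxm] at this
    exact this
  obtain ⟨g, hg⟩ := hcov m
  have hisog := hiso g⁻¹
  -- translated points
  set f : Y → Y := fun z => g⁻¹ • z with hf
  have hfd : ∀ a b : Y, dist (f a) (f b) = dist a b := fun a b => hisog.dist_eq a b
  have hfmp : dist (f m) p < r := by
    have : dist (f m) p = dist (g • (g⁻¹ • m)) (g • p) := ((hiso g).dist_eq _ _).symm
    rw [smul_inv_smul] at this
    rw [this]; exact hg
  have hdxy' : dist (f x) (f y) = dist x y := hfd x y
  -- translated geodesic
  have hgeod' : IsGeodSeg (fun t => f (γ t)) (f x) (f y) := by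
    refine ⟨by simp [hγ0], ?_, ?_⟩
    · rw [hdxy']
      show f (γ (dist x y)) = f y
      rw [hγd]
    · intro s hs t ht
      rw [hdxy'] at hs ht
      rw [hfd, hγ s hs t ht]
  have hx' : f x ∉ Metric.ball p R := by
    simp only [Metric.mem_ball, not_lt]
    have h1 : dist (f x) (f m) = dist x y / 2 := by rw [hfd, hxm]
    have h2 := dist_triangle (f x) p (f m)
    rw [dist_comm p (f m)] at h2
    linarith [hfmp]
  have hy' : f y ∉ Metric.ball p R := by
    simp only [Metric.mem_ball, not_lt]
    have h1 : dist (f y) (f m) = dist x y / 2 := by rw [hfd, hym]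
    have h2 := dist_triangle (f y) p (f m)
    rw [dist_comm p (f m)] at h2
    linarith [hfmp]
  -- translated path stays outside the ball
  have hjoined : JoinedIn (Metric.ball p R)ᶜ (f x) (f y) := by
    refine ⟨c.map hisog.continuous, fun t => ?_⟩
    simp only [Path.map_coe, Function.comp_apply, Set.mem_compl_iff, Metric.mem_ball, not_lt]
    have h1 : dist (f (c t)) (f m) = dist (c t) m := hfd _ _
    have h2 := dist_triangle (f (c t)) p (f m)
    rw [dist_comm p (f m)] at h2
    have h3 := hcon t
    linarith [hfmp]
  have := hsep (f x) (f y) hx' hy' hjoined _ hgeod'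
    (dist x y / 2) (by rw [hdxy']; exact hmem)
  exact this (Metric.mem_ball.mpr hfmp)
end
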